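/- For every natural number m and all real numbers x and z, the coefficient of t^m in the formal power series (1+t)^x / (1 + t(z+1))^2 equals Σ_{0≤l≤n≤m} (-1)^n · C(n,l) · C(x+l, m-n) · (1+z)^{n+l} · (1-z)^{n-l}. -/

import Mathlib

open Finset PowerSeries

/-- Generalized binomial coefficient `C(x, k) = x(x-1)⋯(x-k+1)/k!` for real `x`. -/
noncomputable def gchoose (x : ℝ) (k : ℕ) : ℝ :=
  (∏ i ∈ Finset.range k, (x - i)) / (Nat.factorial k)

/-- The binomial series `(1+t)^x = Σ C(x,k) t^k` as a formal power series. -/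
noncomputable def binomSeries (x : ℝ) : PowerSeries ℝ :=
  PowerSeries.mk fun k => gchoose x k

lemma gchoose_zero (x : ℝ) : gchoose x 0 = 1 := by simp [gchoose]

lemma gchoose_succ (x : ℝ) (k : ℕ) :
    gchoose (x+1) (k+1) = gchoose x (k+1) + gchoose x k := by
  unfold gchoose
  rw [Finset.prod_range_succ' (fun i => x + 1 - (i:ℝ)), Finset.prod_range_succ]
  have h : ∏ i ∈ Finset.range k, (x + 1 - ((i:ℕ)+1 : ℕ)) = ∏ i ∈ Finset.range k, (x - i) := by
    apply Finset.prod_congr rfl; intros i _; push_cast; ring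
  rw [h, Nat.factorial_succ]
  have h1 : (k.factorial : ℝ) ≠ 0 := by exact_mod_cast k.factorial_ne_zero
  have h2 : ((k:ℝ) + 1) ≠ 0 := by positivity
  push_cast
  field_simp
  ring

lemma gchoose_add_nat (x : ℝ) (l : ℕ) : ∀ k : ℕ,
    gchoose (x + l) k = ∑ j ∈ Finset.range (k+1), (l.choose j : ℝ) * gchoose x (k - j) := by
  induction l with
  | zero =>
    intro k
    rw [Finset.sum_eq_single 0]
    · simp
    · intro j _ hj
      rcases Nat.exists_eq_succ_of_ne_zero hj with ⟨j', rfl⟩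
      simp
    · simp
  | succ l ih =>
    intro k
    cases k with
    | zero => simp [gchoose_zero]
    | succ k =>
      have step : gchoose (x + (l+1 : ℕ)) (k+1) = gchoose (x + l) (k+1) + gchoose (x + l) k := by
        have : x + ((l:ℕ)+1 : ℕ) = (x + l) + 1 := by push_cast; ring
        rw [this, gchoose_succ]
      rw [step, ih (k+1), ih k]
      -- RHS target: ∑_{j∈range(k+2)} C(l+1,j) gchoose x (k+1-j)
      rw [Finset.sum_range_succ' (fun j => ((l+1).choose j : ℝ) * gchoose x (k + 1 - j)),
          Finset.sum_range_succ' (fun j => (l.choose j : ℝ) * gchoose x (k + 1 - j))]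
      have : ∀ j ∈ Finset.range (k+1), ((l+1).choose (j+1) : ℝ) * gchoose x (k + 1 - (j+1))
          = (l.choose (j+1) : ℝ) * gchoose x (k + 1 - (j+1)) + (l.choose j : ℝ) * gchoose x (k - j) := by
        intro j _
        rw [Nat.choose_succ_succ]
        push_cast [Nat.succ_eq_add_one]
        ring
      rw [Finset.sum_congr rfl this, Finset.sum_add_distrib]
      simp
      ring

lemma cheb : ∀ k : ℕ, (∑ j ∈ Finset.range (k+1), ((-1:ℝ)/4)^j * ((k-j).choose j : ℝ)) = ((k:ℝ)+1)/2^k := by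
  have peel : ∀ k : ℕ, (∑ j ∈ Finset.range (k+1+1), ((-1:ℝ)/4)^j * ((k+1-j).choose j : ℝ))
      = 1 + ∑ j ∈ Finset.range (k+1), ((-1:ℝ)/4)^(j+1) * ((k-j).choose (j+1) : ℝ) := by
    intro k
    rw [Finset.sum_range_succ' (fun j => ((-1:ℝ)/4)^j * ((k+1-j).choose j : ℝ))]
    simp [Nat.succ_sub_succ, add_comm]
  intro k
  induction k using Nat.twoStepInduction with
  | zero => simp
  | one => norm_num [Finset.sum_range_succ]
  | more k ih1 ih2 =>
    have e1 : (∑ j ∈ Finset.range (k+2+1), ((-1:ℝ)/4)^j * ((k+2-j).choose j : ℝ))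
        = 1 + ∑ j ∈ Finset.range (k+2), ((-1:ℝ)/4)^(j+1) * ((k+1-j).choose (j+1) : ℝ) := by
      rw [Finset.sum_range_succ' (fun j => ((-1:ℝ)/4)^j * ((k+2-j).choose j : ℝ))]
      simp [Nat.succ_sub_succ, add_comm]
    rw [e1]
    -- split last term of inner sum (j = k+1): (k+1)-(k+1)=0, choose 0 (k+2) = 0
    rw [Finset.sum_range_succ]
    have hz : ((k+1-(k+1)).choose (k+1+1) : ℝ) = 0 := by simp
    rw [hz, mul_zero, add_zero]
    -- now for j ∈ range (k+1):  k+1-j = (k-j)+1, Pascal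
    have e2 : ∀ j ∈ Finset.range (k+1), ((-1:ℝ)/4)^(j+1) * ((k+1-j).choose (j+1) : ℝ)
        = ((-1:ℝ)/4)^(j+1) * ((k-j).choose j : ℝ) + ((-1:ℝ)/4)^(j+1) * ((k-j).choose (j+1) : ℝ) := by
      intro j hj
      simp only [Finset.mem_range] at hj
      have : k + 1 - j = (k - j) + 1 := by omega
      rw [this, Nat.choose_succ_succ]
      push_cast; ring
    rw [Finset.sum_congr rfl e2, Finset.sum_add_distrib]
    have e3 : (∑ j ∈ Finset.range (k+1), ((-1:ℝ)/4)^(j+1) * ((k-j).choose j : ℝ))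
        = ((-1:ℝ)/4) * ∑ j ∈ Finset.range (k+1), ((-1:ℝ)/4)^j * ((k-j).choose j : ℝ) := by
      rw [Finset.mul_sum]; apply Finset.sum_congr rfl; intros; ring
    rw [e3, ih1]
    have e4 : (1:ℝ) + ∑ j ∈ Finset.range (k+1), ((-1:ℝ)/4)^(j+1) * ((k-j).choose (j+1) : ℝ)
        = ((k:ℝ)+1+1)/2^(k+1) := by
      rw [← peel k, ih2]
      push_cast; ring
    push_cast
    push_cast at e4
    simp only [pow_succ] at e4 ⊢
    linear_combination e4

lemma geom_inv (c : ℝ) :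
    (1 + PowerSeries.C (R := ℝ) c * X) * PowerSeries.mk (fun n => (-c)^n) = 1 := by
  ext n
  cases n with
  | zero => simp
  | succ n =>
    rw [add_mul, one_mul, map_add, mul_assoc, PowerSeries.coeff_C_mul,
        PowerSeries.coeff_succ_X_mul]
    simp [pow_succ]
    ring

lemma sq_geom (c : ℝ) :
    PowerSeries.mk (fun n => ((-c):ℝ)^n) * PowerSeries.mk (fun n => (-c)^n)
      = PowerSeries.mk (fun n => ((n:ℝ)+1) * (-c)^n) := by
  ext n
  rw [PowerSeries.coeff_mul, Finset.Nat.sum_antidiagonal_eq_sum_range_succ_mk]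
  simp only [coeff_mk]
  have : ∀ i ∈ Finset.range (n+1), (-c)^i * (-c)^(n-i) = (-c)^n := by
    intro i hi
    rw [← pow_add]
    congr 1
    simp only [Finset.mem_range] at hi; omega
  rw [Finset.sum_congr rfl this, Finset.sum_const, Finset.card_range, nsmul_eq_mul]
  push_cast; ring

lemma inv_sq (c : ℝ) :
    (((1 + PowerSeries.C (R := ℝ) c * X) ^ 2)⁻¹ : PowerSeries ℝ)
      = PowerSeries.mk (fun n => ((n:ℝ)+1) * (-c)^n) := by
  rw [PowerSeries.inv_eq_iff_mul_eq_one]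
  · rw [← sq_geom]
    have : ((PowerSeries.mk fun n => ((-c):ℝ)^n) * PowerSeries.mk fun n => (-c)^n) * (1 + PowerSeries.C (R := ℝ) c * X)^2
        = ((1 + PowerSeries.C (R := ℝ) c * X) * PowerSeries.mk fun n => (-c)^n)^2 := by ring
    rw [this, geom_inv, one_pow]
  · simp

lemma triangle (f : ℕ → ℕ → ℝ) : ∀ m : ℕ,
    ∑ n ∈ Finset.range (m+1), ∑ j ∈ Finset.range (m+1-n), f n j
      = ∑ k ∈ Finset.range (m+1), ∑ n ∈ Finset.range (k+1), f n (k-n) := by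
  intro m
  induction m with
  | zero => simp
  | succ m ih =>
    have hL : (∑ n ∈ Finset.range (m+1+1), ∑ j ∈ Finset.range (m+1+1-n), f n j)
        = (∑ n ∈ Finset.range (m+1), ∑ j ∈ Finset.range (m+1+1-n), f n j) + f (m+1) 0 := by
      rw [Finset.sum_range_succ]
      simp
    have e : ∀ n ∈ Finset.range (m+1), (∑ j ∈ Finset.range (m+1+1-n), f n j)
        = (∑ j ∈ Finset.range (m+1-n), f n j) + f n (m+1-n) := by
      intro n hn
      simp only [Finset.mem_range] at hn
      have h : m+1+1-n = (m+1-n)+1 := by omega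
      rw [h, Finset.sum_range_succ]
    have hR : (∑ k ∈ Finset.range (m+1+1), ∑ n ∈ Finset.range (k+1), f n (k-n))
        = (∑ k ∈ Finset.range (m+1), ∑ n ∈ Finset.range (k+1), f n (k-n))
          + ((∑ n ∈ Finset.range (m+1), f n (m+1-n)) + f (m+1) 0) := by
      rw [Finset.sum_range_succ, Finset.sum_range_succ (fun n => f n (m+1-n))]
      simp
    rw [hL, Finset.sum_congr rfl e, Finset.sum_add_distrib, ih, hR]
    ring

lemma collapse (a b : ℝ) (n j : ℕ) :
    ∑ l ∈ Finset.range (n+1), (n.choose l : ℝ) * (l.choose j : ℝ) * a^l * b^(n-l)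
      = (n.choose j : ℝ) * a^j * (a+b)^(n-j) := by
  by_cases hj : j ≤ n
  · have hsub : Finset.Ico j (n+1) ⊆ Finset.range (n+1) := by
      intro l hl; simp only [Finset.mem_Ico] at hl; simp only [Finset.mem_range]; omega
    rw [← Finset.sum_subset hsub (by
      intro l hl hnl
      simp only [Finset.mem_range] at hl
      simp only [Finset.mem_Ico] at hnl
      have : l < j := by omega
      rw [Nat.choose_eq_zero_of_lt this]
      ring)]
    rw [Finset.sum_Ico_eq_sum_range]
    have h1 : n + 1 - j = (n - j) + 1 := by omega
    have e : ∀ i ∈ Finset.range ((n-j)+1),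
        ((n.choose (j+i)) : ℝ) * ((j+i).choose j : ℝ) * a^(j+i) * b^(n-(j+i))
          = (n.choose j : ℝ) * (((n-j).choose i : ℝ) * a^i * b^((n-j)-i)) * a^j := by
      intro i hi
      simp only [Finset.mem_range] at hi
      have hkn : j + i ≤ n := by omega
      have hsk : j ≤ j + i := by omega
      have hc := Nat.choose_mul (n := n) hsk
      have hc' : ((n.choose (j+i)) : ℝ) * ((j+i).choose j : ℝ)
          = (n.choose j : ℝ) * ((n-j).choose ((j+i)-j) : ℝ) := by exact_mod_cast congrArg Nat.cast hc
      have h2 : (j+i)-j = i := by omega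
      have h3 : n - (j+i) = (n-j)-i := by omega
      rw [h3, pow_add, ← mul_assoc, ← mul_assoc, hc', h2]
      ring
    rw [h1, Finset.sum_congr rfl e, ← Finset.sum_mul, ← Finset.mul_sum]
    rw [add_pow a b (n-j)]
    have : (∑ x ∈ Finset.range ((n-j)+1), ((n-j).choose x : ℝ) * a^x * b^(n-j-x))
        = ∑ x ∈ Finset.range ((n-j)+1), a^x * b^((n-j)-x) * ((n-j).choose x : ℝ) :=
      Finset.sum_congr rfl fun x _ => by ring
    rw [this]
    ring
  · rw [Nat.choose_eq_zero_of_lt (show n < j by omega)]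
    rw [Finset.sum_eq_zero]
    · ring
    · intro l hl
      simp only [Finset.mem_range] at hl
      rw [Nat.choose_eq_zero_of_lt (show l < j by omega)]
      ring

theorem coeff_binom_div_linear_sq (m : ℕ) (x z : ℝ) :
    PowerSeries.coeff (R := ℝ) m
        (binomSeries x * ((1 + PowerSeries.C (R := ℝ) (z + 1) * PowerSeries.X) ^ 2)⁻¹) =
      ∑ n ∈ Finset.range (m + 1), ∑ l ∈ Finset.range (n + 1),
        (-1 : ℝ) ^ n * (n.choose l : ℝ) * gchoose (x + l) (m - n) *
          (1 + z) ^ (n + l) * (1 - z) ^ (n - l) := by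
  rw [inv_sq (z+1), mul_comm, PowerSeries.coeff_mul,
      Finset.Nat.sum_antidiagonal_eq_sum_range_succ_mk]
  simp only [coeff_mk, binomSeries]
  -- LHS: Σ_{k∈range(m+1)} ((k:ℝ)+1) * (-(z+1))^k * gchoose x (m-k)
  set F : ℕ → ℕ → ℝ := fun n j =>
    ((-1:ℝ)^n * (1+z)^n * gchoose x (m-n-j)) * ((n.choose j : ℝ) * (1+z)^j * 2^(n-j)) with hF
  have key : (∑ n ∈ Finset.range (m + 1), ∑ l ∈ Finset.range (n + 1),
        (-1 : ℝ) ^ n * (n.choose l : ℝ) * gchoose (x + l) (m - n) *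
          (1 + z) ^ (n + l) * (1 - z) ^ (n - l))
      = ∑ n ∈ Finset.range (m+1), ∑ j ∈ Finset.range (m+1-n), F n j := by
    apply Finset.sum_congr rfl
    intro n hn
    simp only [Finset.mem_range] at hn
    have hr : (m - n) + 1 = m + 1 - n := by omega
    calc ∑ l ∈ Finset.range (n + 1),
          (-1 : ℝ) ^ n * (n.choose l : ℝ) * gchoose (x + l) (m - n) *
            (1 + z) ^ (n + l) * (1 - z) ^ (n - l)
        = ∑ l ∈ Finset.range (n+1), ∑ j ∈ Finset.range ((m-n)+1),
            ((n.choose l : ℝ) * (l.choose j : ℝ) * (1+z)^l * (1-z)^(n-l))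
              * ((-1:ℝ)^n * (1+z)^n * gchoose x (m-n-j)) := by
          apply Finset.sum_congr rfl
          intro l _
          rw [gchoose_add_nat x l (m-n)]
          simp only [Finset.mul_sum, Finset.sum_mul]
          apply Finset.sum_congr rfl
          intro j _
          rw [pow_add]
          ring
      _ = ∑ j ∈ Finset.range ((m-n)+1), ∑ l ∈ Finset.range (n+1),
            ((n.choose l : ℝ) * (l.choose j : ℝ) * (1+z)^l * (1-z)^(n-l))
              * ((-1:ℝ)^n * (1+z)^n * gchoose x (m-n-j)) := Finset.sum_comm
      _ = ∑ j ∈ Finset.range ((m-n)+1), F n j := by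
          apply Finset.sum_congr rfl
          intro j _
          rw [← Finset.sum_mul, collapse (1+z) (1-z) n j]
          have : (1+z) + (1-z) = 2 := by ring
          rw [this, hF]
          ring
      _ = ∑ j ∈ Finset.range (m+1-n), F n j := by rw [hr]
  rw [key, triangle F m]
  apply Finset.sum_congr rfl
  intro k hk
  simp only [Finset.mem_range] at hk
  have inner : ∀ n ∈ Finset.range (k+1), F n (k-n)
      = (gchoose x (m-k) * (1+z)^k) * ((-1:ℝ)^n * 2^(n-(k-n)) * (n.choose (k-n) : ℝ)) := by
    intro n hn
    simp only [Finset.mem_range] at hn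
    have h1 : m - n - (k-n) = m - k := by omega
    have h2 : (1+z:ℝ)^n * (1+z)^(k-n) = (1+z)^k := by
      rw [← pow_add]; congr 1; omega
    rw [hF]
    simp only []
    rw [h1]
    calc ((-1:ℝ)^n * (1+z)^n * gchoose x (m-k)) * ((n.choose (k-n) : ℝ) * (1+z)^(k-n) * 2^(n-(k-n)))
        = ((1+z)^n * (1+z)^(k-n)) * (gchoose x (m-k) * ((-1:ℝ)^n * 2^(n-(k-n)) * (n.choose (k-n) : ℝ))) := by ring
      _ = (gchoose x (m-k) * (1+z)^k) * ((-1:ℝ)^n * 2^(n-(k-n)) * (n.choose (k-n) : ℝ)) := by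
          rw [h2]; ring
  rw [Finset.sum_congr rfl inner, ← Finset.mul_sum]
  -- now: Σ_{n∈range(k+1)} (-1)^n 2^(n-(k-n)) C(n,k-n) = (k+1)(-1)^k
  have refl1 : (∑ n ∈ Finset.range (k+1), ((-1:ℝ)^n * 2^(n-(k-n)) * (n.choose (k-n) : ℝ)))
      = ∑ j ∈ Finset.range (k+1), ((-1:ℝ)^(k-j) * 2^((k-j)-(k-(k-j))) * ((k-j).choose (k-(k-j)) : ℝ)) := by
    rw [← Finset.sum_range_reflect (fun n => ((-1:ℝ)^n * 2^(n-(k-n)) * (n.choose (k-n) : ℝ))) (k+1)]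
    apply Finset.sum_congr rfl
    intro j hj
    simp only [Finset.mem_range] at hj
    have : k + 1 - 1 - j = k - j := by omega
    rw [this]
  have term2 : ∀ j ∈ Finset.range (k+1),
      ((-1:ℝ)^(k-j) * 2^((k-j)-(k-(k-j))) * ((k-j).choose (k-(k-j)) : ℝ))
        = ((-1:ℝ)^k * 2^k) * (((-1:ℝ)/4)^j * ((k-j).choose j : ℝ)) := by
    intro j hj
    simp only [Finset.mem_range] at hj
    have hkj : k - (k-j) = j := by omega
    rw [hkj]
    by_cases h2j : 2*j ≤ k
    · obtain ⟨d, hd⟩ : ∃ d, k = d + 2*j := ⟨k - 2*j, by omega⟩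
      have e1 : k - j = d + j := by omega
      have e2 : (k-j) - j = d := by omega
      rw [e2, e1, hd]
      have h4 : ((-1:ℝ)/4)^j = ((-1:ℝ)^j) / (2^(2*j)) := by
        rw [div_pow]; norm_num [pow_mul]
      rw [h4, pow_add, pow_add, pow_mul]
      field_simp
      ring
    · have : k - j < j := by omega
      rw [Nat.choose_eq_zero_of_lt this]
      push_cast
      ring
  rw [refl1, Finset.sum_congr rfl term2, ← Finset.mul_sum, cheb k]
  have hneg : ((-(z+1)):ℝ)^k = (-1:ℝ)^k * (1+z)^k := by
    rw [neg_pow]; ring_nf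
  rw [hneg]
  have h2k : (2:ℝ)^k ≠ 0 := by positivity
  field_simp
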